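/- Let α ∈ 𝔻, m ∈ ℕ, and φ be holomorphic on a neighborhood of the closed unit disk. Then for every f holomorphic on a neighborhood of the closed unit disk, ⟨φf, k_{α,m}⟩ = ⟨f, Σ_{i=0}^{m} conj(φ^{(m-i)}(α)/(m-i)!) · k_{α,i}⟩, where k_{α,j}(z) = z^j/(1 - conj(α)z)^{j+1} and ⟨·,·⟩ is the L² inner product on the unit circle with normalized measure. In other words, the adjoint of multiplication by φ maps k_{α,m} to Σ_{i=0}^m conj(φ^{(m-i)}(α)/(m-i)!) · k_{α,i}. -/

import Mathlib

open Complex Metric Finset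

open Topology in
lemma pascal_sum (n : ℕ) (a b : ℕ → ℂ) :
    ∑ i ∈ range (n+1), (n.choose i : ℂ) * (a (n-i+1) * b i + a (n-i) * b (i+1))
      = ∑ i ∈ range (n+2), ((n+1).choose i : ℂ) * (a (n+1-i) * b i) := by
  simp only [mul_add, Finset.sum_add_distrib]
  rw [Finset.sum_range_succ' (fun i => ((n+1).choose i : ℂ) * (a (n+1-i) * b i)) (n+1)]
  rw [Finset.sum_range_succ' (fun i => (n.choose i : ℂ) * (a (n-i+1) * b i)) n]
  have h1 : ∑ i ∈ range n, (n.choose (i+1) : ℂ) * (a (n-(i+1)+1) * b (i+1))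
      = ∑ i ∈ range (n+1), (n.choose (i+1) : ℂ) * (a (n-i) * b (i+1)) := by
    rw [Finset.sum_range_succ]
    have h0 : (n.choose (n+1) : ℂ) = 0 := by simp [Nat.choose_eq_zero_of_lt]
    rw [h0, zero_mul, add_zero]
    refine Finset.sum_congr rfl fun i hi => ?_
    have hi' : i < n := Finset.mem_range.mp hi
    have : n - (i+1) + 1 = n - i := by omega
    rw [this]
  rw [h1, add_right_comm, ← Finset.sum_add_distrib]
  have h2 : ∀ i ∈ range (n+1),
      (((n+1).choose (i+1) : ℂ)) * (a (n+1-(i+1)) * b (i+1))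
        = (n.choose (i+1) : ℂ) * (a (n-i) * b (i+1)) + (n.choose i : ℂ) * (a (n-i) * b (i+1)) := by
    intro i _
    have : (n+1).choose (i+1) = n.choose i + n.choose (i+1) := Nat.choose_succ_succ n i
    rw [Nat.succ_sub_succ, this]
    push_cast
    ring
  rw [Finset.sum_congr rfl h2]
  simp only [Nat.choose_zero_right, Nat.cast_one, one_mul, Nat.sub_zero]

lemma leibniz_iteratedDeriv {U : Set ℂ} (hU : IsOpen U) {φ f : ℂ → ℂ}
    (hφ : AnalyticOnNhd ℂ φ U) (hf : AnalyticOnNhd ℂ f U) (n : ℕ) :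
    ∀ x ∈ U, iteratedDeriv n (fun z => φ z * f z) x
      = ∑ i ∈ range (n+1), (n.choose i : ℂ) * (iteratedDeriv (n-i) φ x * iteratedDeriv i f x) := by
  have hφk : ∀ k, AnalyticOnNhd ℂ (iteratedDeriv k φ) U := by
    intro k; rw [iteratedDeriv_eq_iterate]; exact hφ.iterated_deriv k
  have hfk : ∀ k, AnalyticOnNhd ℂ (iteratedDeriv k f) U := by
    intro k; rw [iteratedDeriv_eq_iterate]; exact hf.iterated_deriv k
  induction n with
  | zero => intro x hx; simp
  | succ n ih =>
    intro x hx
    rw [iteratedDeriv_succ]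
    have heq : deriv (iteratedDeriv n fun z => φ z * f z) x
        = deriv (fun y => ∑ i ∈ range (n+1),
            (n.choose i : ℂ) * (iteratedDeriv (n-i) φ y * iteratedDeriv i f y)) x := by
      apply Filter.EventuallyEq.deriv_eq
      filter_upwards [hU.mem_nhds hx] with y hy
      exact ih y hy
    rw [heq]
    have hdiff : ∀ i ∈ range (n+1), DifferentiableAt ℂ
        (fun y => (n.choose i : ℂ) * (iteratedDeriv (n-i) φ y * iteratedDeriv i f y)) x :=
      fun i _ => (((hφk (n-i) x hx).differentiableAt.mul
        (hfk i x hx).differentiableAt).const_mul _)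
    rw [deriv_fun_sum hdiff]
    have hterm : ∀ i ∈ range (n+1),
        deriv (fun y => (n.choose i : ℂ) * (iteratedDeriv (n-i) φ y * iteratedDeriv i f y)) x
          = (n.choose i : ℂ) * (iteratedDeriv (n-i+1) φ x * iteratedDeriv i f x
              + iteratedDeriv (n-i) φ x * iteratedDeriv (i+1) f x) := by
      intro i _
      rw [deriv_const_mul _ ((hφk (n-i) x hx).differentiableAt.fun_mul (hfk i x hx).differentiableAt),
        deriv_fun_mul (hφk (n-i) x hx).differentiableAt (hfk i x hx).differentiableAt,
        ← iteratedDeriv_succ, ← iteratedDeriv_succ]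
    rw [Finset.sum_congr rfl hterm]
    exact pascal_sum n (fun k => iteratedDeriv k φ x) (fun k => iteratedDeriv k f x)

lemma cauchy_higher' (α : ℂ) (hα : ‖α‖ < 1) (U : Set ℂ) (hU : IsOpen U)
    (hUD : closedBall (0:ℂ) 1 ⊆ U) :
    ∀ (j : ℕ) (g : ℂ → ℂ), DifferentiableOn ℂ g U →
      (∮ z in C((0:ℂ),1), g z / (z - α) ^ (j+1))
        = (2 * Real.pi * I) * (iteratedDeriv j g α / (j.factorial : ℂ)) := by
  have hαb : α ∈ ball (0:ℂ) 1 := by simpa [mem_ball_zero_iff] using hα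
  have hsub : sphere (0:ℂ) 1 ⊆ U := fun z hz => hUD (sphere_subset_closedBall hz)
  intro j
  induction j with
  | zero =>
    intro g hg
    simp only [zero_add, pow_one, iteratedDeriv_zero, Nat.factorial_zero, Nat.cast_one, div_one]
    exact circleIntegral_div_sub_of_differentiable_on_off_countable Set.countable_empty hαb
      (hg.continuousOn.mono hUD)
      (fun z hz => hg.differentiableAt (hU.mem_nhds (hUD (ball_subset_closedBall hz.1))))
  | succ j ih =>
    intro g hg
    have hg' : DifferentiableOn ℂ (deriv g) U := ((hg.analyticOnNhd hU).deriv).differentiableOn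
    -- nonvanishing facts on the sphere
    have hzα : ∀ z ∈ sphere (0:ℂ) 1, z - α ≠ 0 := by
      intro z hz
      have : ‖z‖ = 1 := by simpa using hz
      intro h
      rw [sub_eq_zero] at h
      rw [h] at this
      linarith [this ▸ hα]
    -- derivative of F z = g z / (z-α)^(j+1) on the sphere
    have hF : ∀ z ∈ sphere (0:ℂ) 1, HasDerivWithinAt (fun w => g w / (w - α) ^ (j+1))
        (deriv g z / (z - α) ^ (j+1) - ((j:ℂ)+1) * (g z / (z - α) ^ (j+2)))
        (sphere (0:ℂ) 1) z := by
      intro z hz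
      have hzU : z ∈ U := hsub hz
      have hz0 : z - α ≠ 0 := hzα z hz
      have hgz : HasDerivAt g (deriv g z) z :=
        (hg.differentiableAt (hU.mem_nhds hzU)).hasDerivAt
      have hden : HasDerivAt (fun w => (w - α) ^ (j+1))
          (((j:ℂ)+1) * (z - α) ^ j * 1) z := by
        have := ((hasDerivAt_id z).sub_const α).fun_pow (j+1)
        simpa using this
      have hdiv := hgz.div hden (pow_ne_zero _ hz0)
      have hval : (deriv g z * (z - α) ^ (j+1) - g z * (((j:ℂ)+1) * (z - α) ^ j * 1))
          / ((z - α) ^ (j+1)) ^ 2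
          = deriv g z / (z - α) ^ (j+1) - ((j:ℂ)+1) * (g z / (z - α) ^ (j+2)) := by
        field_simp
        ring
      rw [hval] at hdiv
      exact hdiv.hasDerivWithinAt
    have hzero : (∮ z in C((0:ℂ),1),
        (deriv g z / (z - α) ^ (j+1) - ((j:ℂ)+1) * (g z / (z - α) ^ (j+2)))) = 0 :=
      circleIntegral.integral_eq_zero_of_hasDerivWithinAt zero_le_one hF
    -- integrability
    have hcont : ∀ (h : ℂ → ℂ), ContinuousOn h U → ∀ (k : ℕ),
        CircleIntegrable (fun z => h z / (z - α) ^ (k+1)) 0 1 := by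
      intro h hh k
      apply ContinuousOn.circleIntegrable zero_le_one
      exact (hh.mono hsub).div
        (((continuousOn_id.sub continuousOn_const).pow _)) (fun z hz => pow_ne_zero _ (hzα z hz))
    have h1 : CircleIntegrable (fun z => deriv g z / (z - α) ^ (j+1)) 0 1 :=
      hcont _ hg'.continuousOn j
    have h2 : CircleIntegrable (fun z => ((j:ℂ)+1) * (g z / (z - α) ^ (j+2))) 0 1 := by
      exact (hcont _ hg.continuousOn (j+1)).const_mul ((j:ℂ)+1)
    rw [circleIntegral.integral_sub h1 h2, sub_eq_zero] at hzero
    have hIH := ih (deriv g) hg'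
    have hc : (∮ z in C((0:ℂ),1), ((j:ℂ)+1) * (g z / (z - α) ^ (j+2)))
        = ((j:ℂ)+1) * ∮ z in C((0:ℂ),1), g z / (z - α) ^ (j+2) :=
      circleIntegral.integral_const_mul _ _ _ _
    rw [hc, hIH] at hzero
    have hj1 : ((j:ℂ)+1) ≠ 0 := Nat.cast_add_one_ne_zero j
    have hfj : (j.factorial : ℂ) ≠ 0 := Nat.cast_ne_zero.mpr j.factorial_ne_zero
    have h22 : (∮ z in C((0:ℂ),1), g z / (z - α) ^ (j+1+1))
        = ∮ z in C((0:ℂ),1), g z / (z - α) ^ (j+2) := rfl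
    rw [h22, iteratedDeriv_succ', Nat.factorial_succ]
    push_cast
    field_simp at hzero ⊢
    linear_combination (-1 : ℂ) * hzero

/-- The Taylor-coefficient reproducing kernel in H². -/
noncomputable def kern (α : ℂ) (m : ℕ) (z : ℂ) : ℂ :=
  z ^ m / (1 - (starRingEnd ℂ) α * z) ^ (m + 1)

lemma conj_kern_eq (α : ℂ) (hα : ‖α‖ < 1) (m : ℕ) {z : ℂ} (hz : ‖z‖ = 1) :
    (starRingEnd ℂ) (kern α m z) = z / (z - α) ^ (m+1) := by
  have hz0 : z ≠ 0 := by intro h; rw [h] at hz; simp at hz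
  have hzα : z - α ≠ 0 := by
    intro h; rw [sub_eq_zero] at h; rw [h] at hz; linarith [hz ▸ hα]
  have hcz : (starRingEnd ℂ) z = z⁻¹ := by
    rw [Complex.inv_def]
    have : Complex.normSq z = 1 := by
      rw [← Complex.sq_norm]; simp [hz]
    rw [this]
    simp
  have h1 : (starRingEnd ℂ) (kern α m z) = (z⁻¹) ^ m / (1 - α * z⁻¹) ^ (m+1) := by
    simp [kern, map_div₀, map_pow, map_sub, map_mul, map_one, Complex.conj_conj, hcz]
  rw [h1]
  have h2 : 1 - α * z⁻¹ = (z - α) * z⁻¹ := by field_simp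
  rw [h2, mul_pow]
  field_simp
  ring_nf
  rw [mul_inv_cancel₀ hz0, one_mul]

lemma interval_formula (α : ℂ) (hα : ‖α‖ < 1) (U : Set ℂ) (hU : IsOpen U)
    (hUD : closedBall (0:ℂ) 1 ⊆ U) (j : ℕ) (g : ℂ → ℂ) (hg : DifferentiableOn ℂ g U) :
    ∫ θ in (0:ℝ)..(2*Real.pi),
        g (Complex.exp (θ * I)) * (Complex.exp (θ * I) / (Complex.exp (θ * I) - α) ^ (j+1))
      = 2 * Real.pi * (iteratedDeriv j g α / (j.factorial : ℂ)) := by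
  have h := cauchy_higher' α hα U hU hUD j g hg
  rw [circleIntegral] at h
  simp only [deriv_circleMap, circleMap, ofReal_one, one_mul, zero_add, smul_eq_mul] at h
  have h2 : (∫ θ in (0:ℝ)..(2*Real.pi),
        Complex.exp (θ * I) * I * (g (Complex.exp (θ * I)) / (Complex.exp (θ * I) - α) ^ (j+1)))
      = I * ∫ θ in (0:ℝ)..(2*Real.pi),
        g (Complex.exp (θ * I)) * (Complex.exp (θ * I) / (Complex.exp (θ * I) - α) ^ (j+1)) := by
    rw [← intervalIntegral.integral_const_mul]
    apply intervalIntegral.integral_congr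
    intro θ _
    ring
  rw [h2] at h
  have h3 : (2 * (Real.pi:ℂ) * I) * (iteratedDeriv j g α / (j.factorial : ℂ))
      = I * (2 * Real.pi * (iteratedDeriv j g α / (j.factorial : ℂ))) := by ring
  rw [h3] at h
  exact mul_left_cancel₀ I_ne_zero h

theorem stmt5 (α : ℂ) (hα : ‖α‖ < 1) (m : ℕ) (φ : ℂ → ℂ) (U : Set ℂ) (hU : IsOpen U)
    (hUD : closedBall (0:ℂ) 1 ⊆ U) (hφ : DifferentiableOn ℂ φ U)
    (f : ℂ → ℂ) (V : Set ℂ) (hV : IsOpen V) (hVD : closedBall (0:ℂ) 1 ⊆ V)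
    (hf : DifferentiableOn ℂ f V) :
    (2 * Real.pi)⁻¹ • ∫ θ in (0:ℝ)..(2 * Real.pi),
        (φ (Complex.exp (θ * Complex.I)) * f (Complex.exp (θ * Complex.I))) *
          (starRingEnd ℂ) (kern α m (Complex.exp (θ * Complex.I))) =
      (2 * Real.pi)⁻¹ • ∫ θ in (0:ℝ)..(2 * Real.pi),
        f (Complex.exp (θ * Complex.I)) *
          (starRingEnd ℂ) (∑ i ∈ Finset.range (m + 1),
            (starRingEnd ℂ) (iteratedDeriv (m - i) φ α / ((m - i).factorial : ℂ)) *
              kern α i (Complex.exp (θ * Complex.I))) := by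
  set W := U ∩ V with hWdef
  have hW : IsOpen W := hU.inter hV
  have hWD : closedBall (0:ℂ) 1 ⊆ W := Set.subset_inter hUD hVD
  have hφW : DifferentiableOn ℂ φ W := hφ.mono Set.inter_subset_left
  have hfW : DifferentiableOn ℂ f W := hf.mono Set.inter_subset_right
  have hgW : DifferentiableOn ℂ (fun z => φ z * f z) W := hφW.mul hfW
  have hαW : α ∈ W := hWD (by simpa [mem_closedBall_zero_iff] using hα.le)
  have hnorm : ∀ θ : ℝ, ‖Complex.exp (θ * Complex.I)‖ = 1 := fun θ => by
    simpa using Complex.norm_exp_ofReal_mul_I θ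
  -- LHS
  have hL : (∫ θ in (0:ℝ)..(2 * Real.pi),
      (φ (Complex.exp (θ * Complex.I)) * f (Complex.exp (θ * Complex.I))) *
        (starRingEnd ℂ) (kern α m (Complex.exp (θ * Complex.I))))
      = 2 * Real.pi * (iteratedDeriv m (fun z => φ z * f z) α / (m.factorial : ℂ)) := by
    rw [show (∫ θ in (0:ℝ)..(2 * Real.pi),
        (φ (Complex.exp (θ * Complex.I)) * f (Complex.exp (θ * Complex.I))) *
          (starRingEnd ℂ) (kern α m (Complex.exp (θ * Complex.I))))
        = ∫ θ in (0:ℝ)..(2*Real.pi), (fun z => φ z * f z) (Complex.exp (θ * I)) *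
            (Complex.exp (θ * I) / (Complex.exp (θ * I) - α) ^ (m+1)) from
      intervalIntegral.integral_congr fun θ _ => by
        rw [conj_kern_eq α hα m (hnorm θ)]]
    exact interval_formula α hα W hW hWD m _ hgW
  -- RHS integrand rewrite
  have hR1 : ∀ θ : ℝ, f (Complex.exp (θ * Complex.I)) *
      (starRingEnd ℂ) (∑ i ∈ Finset.range (m + 1),
        (starRingEnd ℂ) (iteratedDeriv (m - i) φ α / ((m - i).factorial : ℂ)) *
          kern α i (Complex.exp (θ * Complex.I)))
      = ∑ i ∈ Finset.range (m + 1),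
          (iteratedDeriv (m - i) φ α / ((m - i).factorial : ℂ)) *
            (f (Complex.exp (θ * I)) *
              (Complex.exp (θ * I) / (Complex.exp (θ * I) - α) ^ (i+1))) := by
    intro θ
    rw [map_sum, Finset.mul_sum]
    refine Finset.sum_congr rfl fun i _ => ?_
    rw [map_mul, Complex.conj_conj, conj_kern_eq α hα i (hnorm θ)]
    ring
  -- integrability of each term
  have hcont : ∀ i : ℕ, Continuous (fun θ : ℝ =>
      (iteratedDeriv (m - i) φ α / ((m - i).factorial : ℂ)) *
        (f (Complex.exp (θ * I)) *
          (Complex.exp (θ * I) / (Complex.exp (θ * I) - α) ^ (i+1)))) := by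
    intro i
    have he : Continuous (fun θ : ℝ => Complex.exp (θ * I)) :=
      (Complex.continuous_ofReal.mul continuous_const).cexp
    have hfe : Continuous (fun θ : ℝ => f (Complex.exp (θ * I))) := by
      rw [continuous_iff_continuousAt]
      intro θ
      exact ((hf.differentiableAt (hV.mem_nhds
        (hVD (by simp [mem_closedBall_zero_iff, hnorm θ])))).continuousAt).comp he.continuousAt
    have hden : ∀ θ : ℝ, (Complex.exp (θ * I) - α) ^ (i+1) ≠ 0 := by
      intro θ
      apply pow_ne_zero
      intro h
      rw [sub_eq_zero] at h
      have := hnorm θ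
      rw [h] at this
      linarith [this ▸ hα]
    exact continuous_const.mul (hfe.mul (he.div
      ((he.sub continuous_const).pow _) hden))
  have hR : (∫ θ in (0:ℝ)..(2 * Real.pi),
      f (Complex.exp (θ * Complex.I)) *
        (starRingEnd ℂ) (∑ i ∈ Finset.range (m + 1),
          (starRingEnd ℂ) (iteratedDeriv (m - i) φ α / ((m - i).factorial : ℂ)) *
            kern α i (Complex.exp (θ * Complex.I))))
      = ∑ i ∈ Finset.range (m + 1),
          (iteratedDeriv (m - i) φ α / ((m - i).factorial : ℂ)) *
            (2 * Real.pi * (iteratedDeriv i f α / (i.factorial : ℂ))) := by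
    rw [intervalIntegral.integral_congr (fun θ _ => hR1 θ)]
    rw [intervalIntegral.integral_finset_sum
      (fun i _ => ((hcont i).intervalIntegrable _ _))]
    refine Finset.sum_congr rfl fun i _ => ?_
    rw [intervalIntegral.integral_const_mul]
    rw [interval_formula α hα W hW hWD i f hfW]
  rw [hL, hR]
  -- final algebra
  have hπ : (2 * Real.pi : ℝ) ≠ 0 := by positivity
  have hsmul : ∀ c : ℂ, (2 * Real.pi)⁻¹ • ((2 * Real.pi : ℂ) * c) = c := by
    intro c
    have h2πc : ((2 * Real.pi : ℝ) : ℂ) ≠ 0 := Complex.ofReal_ne_zero.mpr hπ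
    rw [Complex.real_smul]
    push_cast at h2πc ⊢
    field_simp
  rw [hsmul]
  have : (∑ i ∈ Finset.range (m + 1),
      (iteratedDeriv (m - i) φ α / ((m - i).factorial : ℂ)) *
        (2 * Real.pi * (iteratedDeriv i f α / (i.factorial : ℂ))))
      = (2 * Real.pi : ℂ) * ∑ i ∈ Finset.range (m + 1),
          (iteratedDeriv (m - i) φ α / ((m - i).factorial : ℂ)) *
            (iteratedDeriv i f α / (i.factorial : ℂ)) := by
    rw [Finset.mul_sum]
    exact Finset.sum_congr rfl fun i _ => by ring
  rw [this, hsmul]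
  -- Leibniz
  rw [leibniz_iteratedDeriv hW (hφW.analyticOnNhd hW) (hfW.analyticOnNhd hW) m α hαW]
  rw [Finset.sum_div]
  refine Finset.sum_congr rfl fun i hi => ?_
  have him : i ≤ m := Nat.lt_succ_iff.mp (Finset.mem_range.mp hi)
  have hfact : ((m.choose i : ℂ)) * (i.factorial : ℂ) * ((m-i).factorial : ℂ)
      = (m.factorial : ℂ) := by
    exact_mod_cast congrArg (Nat.cast : ℕ → ℂ) (Nat.choose_mul_factorial_mul_factorial him)
  have h1 : ((m-i).factorial : ℂ) ≠ 0 := Nat.cast_ne_zero.mpr (Nat.factorial_ne_zero _)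
  have h2 : ((i).factorial : ℂ) ≠ 0 := Nat.cast_ne_zero.mpr (Nat.factorial_ne_zero _)
  have h3 : ((m).factorial : ℂ) ≠ 0 := Nat.cast_ne_zero.mpr (Nat.factorial_ne_zero _)
  field_simp
  linear_combination (iteratedDeriv (m-i) φ α * iteratedDeriv i f α) * hfact
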